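/- Let G be a finite simple graph with exactly 7 edges, exactly 12 vertices of odd degree, and no isolated vertices. Then every connected component of G contains either exactly 2 or exactly 4 vertices of odd degree. -/

import Mathlib

private lemma exists_parent {V : Type} (G : SimpleGraph V) {r v : V}
    (hr : G.Reachable r v) (hv : v ≠ r) :
    ∃ u, G.Adj u v ∧ G.dist r u < G.dist r v := by
  obtain ⟨p, hp⟩ := hr.exists_walk_length_eq_dist
  have hnil : ¬ p.reverse.Nil := SimpleGraph.Walk.not_nil_of_ne hv
  rw [SimpleGraph.Walk.not_nil_iff] at hnil
  obtain ⟨u, h, q, hq⟩ := hnil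
  refine ⟨u, h.symm, ?_⟩
  have h1 : G.dist r u ≤ q.reverse.length := SimpleGraph.dist_le _
  have h2 : q.length + 1 = p.length := by
    have := congrArg SimpleGraph.Walk.length hq
    simp at this; omega
  have h3 : 0 < G.dist r v := by
    have := (SimpleGraph.Reachable.pos_dist_of_ne hr hv.symm)
    exact this
  rw [SimpleGraph.Walk.length_reverse] at h1
  omega

private lemma connected_card_le {V : Type} [Fintype V] (G : SimpleGraph V)
    (h : G.Connected) : Fintype.card V ≤ G.edgeSet.ncard + 1 := by
  classical
  obtain ⟨r⟩ := h.nonempty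
  have key : ∀ v : {v : V // v ≠ r}, ∃ u, G.Adj u v.1 ∧ G.dist r u < G.dist r v.1 :=
    fun v => exists_parent G (h.preconnected r v.1) v.2
  choose f hadj hlt using key
  have hinj : Function.Injective
      (fun v : {v : V // v ≠ r} => (⟨s(f v, v.1), (hadj v)⟩ : G.edgeSet)) := by
    intro v w hvw
    replace hvw := congrArg Subtype.val hvw
    simp only [Subtype.mk_eq_mk, Sym2.eq_iff] at hvw
    rcases hvw with ⟨h1, h2⟩ | ⟨h1, h2⟩
    · exact Subtype.ext h2
    · exfalso
      have hv := hlt v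
      have hw := hlt w
      rw [h1] at hv
      rw [← h2] at hw
      omega
  have hle : Nat.card {v : V // v ≠ r} ≤ Nat.card G.edgeSet :=
    Nat.card_le_card_of_injective _ hinj
  rw [Nat.card_eq_fintype_card] at hle
  rw [← Nat.card_coe_set_eq]
  have hcard : Fintype.card {v : V // v ≠ r} = Fintype.card V - 1 := by
    have := Fintype.card_subtype_compl (fun v : V => v = r)
    simpa [Fintype.card_subtype_eq] using this
  have : 1 ≤ Fintype.card V := Fintype.card_pos_iff.mpr ⟨r⟩
  omega

private lemma walk_reach {V : Type} (G : SimpleGraph V) (s : Set V)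
    {a b : V} (p : G.Walk a b) (hs : ∀ x ∈ p.support, x ∈ s) :
    (G.induce s).Reachable ⟨a, hs a p.start_mem_support⟩ ⟨b, hs b p.end_mem_support⟩ := by
  induction p with
  | nil => exact SimpleGraph.Reachable.refl _
  | @cons u u' w h q ih =>
      have hq : ∀ x ∈ q.support, x ∈ s := fun x hx => hs x (by simp [hx])
      have h1 : (G.induce s).Adj ⟨u, hs u (by simp)⟩ ⟨u', hq u' q.start_mem_support⟩ := by
        simpa using h
      exact (h1.reachable).trans (ih hq)

private lemma induce_supp_connected {V : Type} (G : SimpleGraph V)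
    (c : G.ConnectedComponent) : (G.induce c.supp).Connected := by
  classical
  rw [SimpleGraph.connected_iff]
  obtain ⟨v, hv⟩ := c.exists_rep
  refine ⟨?_, ⟨⟨v, by rw [SimpleGraph.ConnectedComponent.mem_supp_iff]; exact hv⟩⟩⟩
  rintro ⟨a, ha⟩ ⟨b, hb⟩
  have hab : G.Reachable a b := by
    rw [SimpleGraph.ConnectedComponent.mem_supp_iff] at ha hb
    exact SimpleGraph.ConnectedComponent.exact (ha.trans hb.symm)
  obtain ⟨p⟩ := hab
  have hs : ∀ x ∈ p.support, x ∈ c.supp := by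
    intro x hx
    rw [SimpleGraph.ConnectedComponent.mem_supp_iff] at ha ⊢
    rw [← ha]
    exact SimpleGraph.ConnectedComponent.sound ((p.takeUntil x hx).reverse.reachable)
  exact walk_reach G c.supp p hs

private lemma induce_degree {V : Type} [Fintype V] (G : SimpleGraph V)
    [DecidableRel G.Adj] (s : Set V) [DecidablePred (· ∈ s)]
    (hcl : ∀ ⦃x y⦄, x ∈ s → G.Adj x y → y ∈ s) (v : ↥s)
    [Fintype ((G.induce s).neighborSet v)] [Fintype (G.neighborSet ↑v)] :
    (G.induce s).degree v = G.degree ↑v := by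
  rw [← SimpleGraph.card_neighborSet_eq_degree, ← SimpleGraph.card_neighborSet_eq_degree]
  apply Fintype.card_congr
  refine ⟨fun u => ⟨u.1.1, u.2⟩, fun u => ⟨⟨↑u, hcl v.2 u.2⟩, u.2⟩, ?_, ?_⟩
  · rintro ⟨⟨u, hu⟩, h⟩; rfl
  · rintro ⟨u, h⟩; rfl

private lemma induce_degree' {V : Type} [Fintype V] (G : SimpleGraph V)
    [DecidableRel G.Adj] (s : Set V) [DecidablePred (· ∈ s)]
    (hcl : ∀ ⦃x y⦄, x ∈ s → G.Adj x y → y ∈ s) (v : ↥s)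
    [Fintype ((G.induce s).neighborSet v)] [Fintype (G.neighborSet ↑v)] :
    (G.induce s).degree v = G.degree ↑v := by
  rw [← SimpleGraph.card_neighborSet_eq_degree, ← SimpleGraph.card_neighborSet_eq_degree]
  apply Fintype.card_congr
  refine ⟨fun u => ⟨u.1.1, u.2⟩, fun u => ⟨⟨↑u, hcl v.2 u.2⟩, u.2⟩, ?_, ?_⟩
  · rintro ⟨⟨u, hu⟩, h⟩; rfl
  · rintro ⟨u, h⟩; rfl

private lemma sum_deg_closed {V : Type} [Fintype V] (G : SimpleGraph V)
    [DecidableRel G.Adj] (s : Set V) [DecidablePred (· ∈ s)]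
    (hcl : ∀ ⦃x y⦄, x ∈ s → G.Adj x y → y ∈ s) :
    ∑ v ∈ s.toFinset, G.degree v = 2 * (G.induce s).edgeFinset.card := by
  classical
  rw [← SimpleGraph.sum_degrees_eq_twice_card_edges]
  rw [← Finset.sum_set_coe (f := fun v => G.degree v) (s := s)]
  exact Finset.sum_congr rfl (fun v _ => (induce_degree' G s hcl v).symm)

/-- In a finite simple graph with exactly 7 edges, exactly 12 vertices of odd
degree, and no isolated vertices, every connected component contains either
exactly 2 or exactly 4 vertices of odd degree. -/
theorem component_odd_vertices_two_or_four
    {V : Type} [Finite V] (G : SimpleGraph V)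
    (hedges : G.edgeSet.ncard = 7)
    (hodd : {v : V | Odd ((G.neighborSet v).ncard)}.ncard = 12)
    (hiso : ∀ v : V, (G.neighborSet v).ncard ≠ 0) :
    ∀ c : G.ConnectedComponent,
      {v : V | G.connectedComponentMk v = c ∧ Odd ((G.neighborSet v).ncard)}.ncard = 2 ∨
      {v : V | G.connectedComponentMk v = c ∧ Odd ((G.neighborSet v).ncard)}.ncard = 4 := by
  classical
  have : Fintype V := Fintype.ofFinite V
  intro c
  have hdeg : ∀ v : V, (G.neighborSet v).ncard = G.degree v := fun v => by
    rw [Set.ncard_eq_toFinset_card', Set.toFinset_card,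
      SimpleGraph.card_neighborSet_eq_degree]
  set S : Set V := c.supp with hS
  set p : V → Prop := fun v => Odd (G.degree v) with hp
  have hgoal_set : {v : V | G.connectedComponentMk v = c ∧ Odd ((G.neighborSet v).ncard)}
      = ↑(S.toFinset.filter p) := by
    ext v
    simp [hS, hp, hdeg, SimpleGraph.ConnectedComponent.mem_supp_iff]
  rw [hgoal_set, Set.ncard_coe_finset]
  set k := (S.toFinset.filter p).card with hk
  -- total odd count
  have h12 : (Finset.univ.filter p).card = 12 := by
    calc (Finset.univ.filter p).card
        = {v | Odd ((G.neighborSet v).ncard)}.toFinset.card := by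
          congr 1; ext v; simp [hp, hdeg]
      _ = 12 := by rw [← Set.ncard_eq_toFinset_card', hodd]
  -- total degree sum
  have h14 : ∑ v, G.degree v = 14 := by
    rw [SimpleGraph.sum_degrees_eq_twice_card_edges]
    have h7 : G.edgeFinset.card = 7 := by
      rw [SimpleGraph.edgeFinset_card, ← Nat.card_eq_fintype_card,
        Nat.card_coe_set_eq, hedges]
    omega
  -- closure
  have hclS : ∀ ⦃x y⦄, x ∈ S → G.Adj x y → y ∈ S := by
    intro x y hx hxy
    rw [hS, SimpleGraph.ConnectedComponent.mem_supp_iff] at hx ⊢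
    rw [← hx]
    exact SimpleGraph.ConnectedComponent.sound hxy.symm.reachable
  have hclT : ∀ ⦃x y⦄, x ∈ Sᶜ → G.Adj x y → y ∈ Sᶜ := by
    intro x y hx hxy hy
    exact hx (hclS hy hxy.symm)
  -- degree sums over S and complement
  have hES : ∑ v ∈ S.toFinset, G.degree v = 2 * (G.induce S).edgeFinset.card :=
    sum_deg_closed G S hclS
  have hET : ∑ v ∈ Sᶜ.toFinset, G.degree v = 2 * (G.induce Sᶜ).edgeFinset.card :=
    sum_deg_closed G Sᶜ hclT
  have hsplit : ∑ v ∈ S.toFinset, G.degree v + ∑ v ∈ Sᶜ.toFinset, G.degree v = 14 := by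
    rw [← h14]
    have hc : Sᶜ.toFinset = S.toFinsetᶜ := by ext v; simp
    rw [hc, Finset.sum_add_sum_compl]
  -- connectivity bound
  have hconn := connected_card_le (G.induce S) (induce_supp_connected G c)
  have hcardS : Fintype.card ↥S = S.toFinset.card := (Set.toFinset_card S).symm
  have hedgecard : (G.induce S).edgeSet.ncard = (G.induce S).edgeFinset.card := by
    rw [SimpleGraph.edgeFinset_card, ← Nat.card_eq_fintype_card, Nat.card_coe_set_eq]
  -- k ≤ |S|
  have hkle : k ≤ S.toFinset.card := Finset.card_filter_le _ _
  -- parity of k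
  have hkeven : Even k := by
    have h := SimpleGraph.even_card_odd_degree_vertices (G.induce S)
    have hcb : (Finset.univ.filter fun v : ↥S => Odd ((G.induce S).degree v)).card
        = (S.toFinset.filter p).card := by
      refine Finset.card_bij' (fun v _ => (v : V))
        (fun v hv => ⟨v, by
          simp only [Finset.mem_filter, Set.mem_toFinset] at hv; exact hv.1⟩)
        ?_ ?_ ?_ ?_
      · intro a ha
        simp only [Finset.mem_filter, Finset.mem_univ, true_and] at ha
        simp only [Finset.mem_filter, Set.mem_toFinset]
        exact ⟨a.2, by rwa [induce_degree' G S hclS a] at ha⟩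
      · intro a ha
        simp only [Finset.mem_filter, Set.mem_toFinset] at ha
        simp only [Finset.mem_filter, Finset.mem_univ, true_and]
        rw [induce_degree' G S hclS]
        exact ha.2
      · intros; rfl
      · intros; rfl
    rwa [hcb] at h
  -- split of 12
  have hsplit12 : ((Finset.univ.filter p).filter (fun v => v ∈ S.toFinset)).card
      + ((Finset.univ.filter p).filter (fun v => ¬ v ∈ S.toFinset)).card = 12 := by
    rw [Finset.card_filter_add_card_filter_not, h12]
  have hfil : ((Finset.univ.filter p).filter (fun v => v ∈ S.toFinset)).card = k := by
    rw [hk]; congr 1; ext v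
    simp only [Finset.mem_filter, Finset.mem_univ, true_and, Set.mem_toFinset]
    tauto
  -- lower bound on degree sum over complement
  have hkT : ((Finset.univ.filter p).filter (fun v => ¬ v ∈ S.toFinset)).card
      ≤ ∑ v ∈ Sᶜ.toFinset, G.degree v := by
    have hsub : ((Finset.univ.filter p).filter (fun v => ¬ v ∈ S.toFinset)) ⊆ Sᶜ.toFinset := by
      intro v hv
      simp only [Finset.mem_filter, Set.mem_toFinset] at hv ⊢
      simpa using hv.2
    calc ((Finset.univ.filter p).filter (fun v => ¬ v ∈ S.toFinset)).card
        ≤ ∑ v ∈ (Finset.univ.filter p).filter (fun v => ¬ v ∈ S.toFinset), G.degree v := by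
          rw [Finset.card_eq_sum_ones]
          apply Finset.sum_le_sum
          intro v hv
          simp only [Finset.mem_filter, Finset.mem_univ, true_and, hp] at hv
          exact hv.1.pos
      _ ≤ ∑ v ∈ Sᶜ.toFinset, G.degree v :=
          Finset.sum_le_sum_of_subset hsub
  -- k ≠ 0
  have hk0 : k ≠ 0 := by
    intro h0
    have hemp : S.toFinset.filter p = ∅ := Finset.card_eq_zero.mp (hk ▸ h0)
    have hev : ∀ v ∈ S.toFinset, ¬ p v := by
      intro v hv hpv
      have : v ∈ S.toFinset.filter p := Finset.mem_filter.mpr ⟨hv, hpv⟩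
      rw [hemp] at this
      simp at this
    have hdeg2 : ∀ v ∈ S.toFinset, 2 ≤ G.degree v := by
      intro v hv
      have h1 : G.degree v ≠ 0 := by rw [← hdeg v]; exact hiso v
      have h2 : ¬ Odd (G.degree v) := hev v hv
      rcases Nat.even_or_odd (G.degree v) with he | ho
      · obtain ⟨m, hm⟩ := he; omega
      · exact absurd ho h2
    obtain ⟨v₀, hv₀⟩ := c.exists_rep
    have hv₀S : v₀ ∈ S.toFinset := by rw [Set.mem_toFinset]; exact hv₀
    have h1lt : 1 < (G.neighborFinset v₀).card := by
      have := hdeg2 v₀ hv₀S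
      rw [SimpleGraph.degree] at this
      omega
    obtain ⟨u, hu, w, hw, huw⟩ := Finset.one_lt_card.mp h1lt
    rw [SimpleGraph.mem_neighborFinset] at hu hw
    have huS : u ∈ S.toFinset := by
      rw [Set.mem_toFinset]; exact hclS (Set.mem_toFinset.mp hv₀S) hu
    have hwS : w ∈ S.toFinset := by
      rw [Set.mem_toFinset]; exact hclS (Set.mem_toFinset.mp hv₀S) hw
    have h3sub : ({v₀, u, w} : Finset V) ⊆ S.toFinset := by
      intro x hx
      simp only [Finset.mem_insert, Finset.mem_singleton] at hx
      rcases hx with rfl | rfl | rfl <;> assumption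
    have h3card : ({v₀, u, w} : Finset V).card = 3 := by
      rw [Finset.card_insert_of_notMem (by simp [hu.ne, hw.ne]),
        Finset.card_insert_of_notMem (by simp [huw]), Finset.card_singleton]
    have hS3 : 3 ≤ S.toFinset.card := h3card ▸ Finset.card_le_card h3sub
    have hSsum : 2 * S.toFinset.card ≤ ∑ v ∈ S.toFinset, G.degree v := by
      calc 2 * S.toFinset.card = S.toFinset.card * 2 := by ring
        _ = ∑ _v ∈ S.toFinset, 2 := by rw [Finset.sum_const, smul_eq_mul]
        _ ≤ ∑ v ∈ S.toFinset, G.degree v := Finset.sum_le_sum hdeg2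
    omega
  obtain ⟨m, hm⟩ := hkeven
  omega
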